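/- If the function algebra F is invariant under all scalings T_λ (λ ∈ R), then the map φ sending Σ_k f_k U^k to Σ_k (T_{ħ₁/ħ₂} f_k) U^k is a *-algebra isomorphism from the shift algebra A^D_{ħ₁,q}(F) to A^D_{ħ₂,q}(F). -/

import Mathlib

open scoped BigOperators

noncomputable section

abbrev V (D : ℕ) := Fin D → ℝ
abbrev L (D : ℕ) := Fin D → ℤ

def cz {D : ℕ} (n : L D) : V D := fun i => (n i : ℝ)

def Nr (D : ℕ) (x y : Fin D → ℝ) : ℝ :=
  ∑ m : Fin D, ∑ n : Fin D, if (n : ℕ) < (m : ℕ) then x m * y n else 0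

def Nz (D : ℕ) (k l : L D) : ℤ :=
  ∑ m : Fin D, ∑ n : Fin D, if (n : ℕ) < (m : ℕ) then k m * l n else 0

def Sh (D : ℕ) (hb : ℝ) (k : L D) (f : V D → ℂ) : V D → ℂ :=
  fun u => f (fun i => u i + hb * (k i : ℝ))

abbrev Alg (D : ℕ) := (L D) →₀ ((V D) → ℂ)

def amul (D : ℕ) (hb : ℝ) (q : ℂ) (a b : Alg D) : Alg D :=
  a.sum fun k f => b.sum fun l g =>
    Finsupp.single (k + l) ((q ^ (Nz D k l)) • (f * Sh D hb k g))

def astar (D : ℕ) (hb : ℝ) (q : ℂ) (a : Alg D) : Alg D :=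
  a.sum fun k f => Finsupp.single (-k) ((q ^ (Nz D (-k) (-k))) • Sh D hb (-k) (star f))

structure GoodF (D : ℕ) (hb : ℝ) (F : Set (V D → ℂ)) : Prop where
  zero_mem : (0 : V D → ℂ) ∈ F
  add_mem : ∀ f ∈ F, ∀ g ∈ F, f + g ∈ F
  mul_mem : ∀ f ∈ F, ∀ g ∈ F, f * g ∈ F
  smul_mem : ∀ (c : ℂ), ∀ f ∈ F, c • f ∈ F
  star_mem : ∀ f ∈ F, star f ∈ F
  shift_mem : ∀ (k : L D), ∀ f ∈ F, Sh D hb k f ∈ F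

def SeparatesPts (D : ℕ) (F : Set (V D → ℂ)) : Prop :=
  ∀ x y : V D, x ≠ y → ∃ f ∈ F, f x ≠ f y


/-- The scaling operator `(T_λ f)(u) = f(λu)`. -/
def Tmap (D : ℕ) (lam : ℝ) (f : V D → ℂ) : V D → ℂ := fun u => f (fun i => lam * u i)

/-- The map `Σ f_k U^k ↦ Σ (T_{ħ₁/ħ₂} f_k) U^k`. -/
def phiT (D : ℕ) (lam : ℝ) (a : Alg D) : Alg D :=
  a.sum fun k f => Finsupp.single k (Tmap D lam f)


section Aux

def TmapHom (D : ℕ) (lam : ℝ) : ((V D) → ℂ) →+ ((V D) → ℂ) :=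
  { toFun := Tmap D lam, map_zero' := rfl, map_add' := fun _ _ => rfl }

lemma phiT_apply (D : ℕ) (lam : ℝ) (a : Alg D) (k : L D) :
    phiT D lam a k = Tmap D lam (a k) := by
  classical
  rw [phiT, Finsupp.sum_apply]
  simp only [Finsupp.single_apply]
  rw [Finsupp.sum_ite_eq' a k (fun k f => Tmap D lam f)]
  split_ifs with h
  · rfl
  · rw [Finsupp.notMem_support_iff.mp h]; rfl

lemma Tmap_zero (D : ℕ) (lam : ℝ) : Tmap D lam (0 : V D → ℂ) = 0 := rfl

lemma phiT_eq (D : ℕ) (lam : ℝ) (a : Alg D) :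
    phiT D lam a = Finsupp.mapRange (Tmap D lam) (Tmap_zero D lam) a := by
  ext k; rw [phiT_apply, Finsupp.mapRange_apply]

def phiTHom (D : ℕ) (lam : ℝ) : Alg D →+ Alg D :=
  Finsupp.mapRange.addMonoidHom (TmapHom D lam)

lemma phiT_eq' (D : ℕ) (lam : ℝ) (a : Alg D) :
    phiT D lam a = phiTHom D lam a := phiT_eq D lam a

lemma phiT_sum {ι : Type*} (D : ℕ) (lam : ℝ) (s : ι →₀ (V D → ℂ))
    (g : ι → (V D → ℂ) → Alg D) :
    phiT D lam (s.sum g) = s.sum fun k f => phiT D lam (g k f) := by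
  rw [phiT_eq']
  rw [map_finsuppSum]
  exact Finsupp.sum_congr fun k _ => (phiT_eq' D lam _).symm

lemma phiT_single (D : ℕ) (lam : ℝ) (k : L D) (f : V D → ℂ) :
    phiT D lam (Finsupp.single k f) = Finsupp.single k (Tmap D lam f) := by
  ext m
  rw [phiT_apply, Finsupp.single_apply, Finsupp.single_apply]
  split_ifs <;> rfl

lemma Tmap_comp (D : ℕ) (l1 l2 : ℝ) (h : l2 * l1 = 1) (f : V D → ℂ) :
    Tmap D l1 (Tmap D l2 f) = f := by
  funext u
  simp only [Tmap]
  congr 1; funext i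
  rw [← mul_assoc, h, one_mul]

lemma Tmap_smul (D : ℕ) (lam : ℝ) (c : ℂ) (f : V D → ℂ) :
    Tmap D lam (c • f) = c • Tmap D lam f := rfl

lemma Tmap_mul (D : ℕ) (lam : ℝ) (f g : V D → ℂ) :
    Tmap D lam (f * g) = Tmap D lam f * Tmap D lam g := rfl

lemma Tmap_star (D : ℕ) (lam : ℝ) (f : V D → ℂ) :
    Tmap D lam (star f) = star (Tmap D lam f) := rfl

lemma Sh_zero (D : ℕ) (hb : ℝ) (k : L D) : Sh D hb k (0 : V D → ℂ) = 0 := rfl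

lemma Tmap_Sh (D : ℕ) (hb₁ hb₂ : ℝ) (h2 : hb₂ ≠ 0) (k : L D) (f : V D → ℂ) :
    Tmap D (hb₁ / hb₂) (Sh D hb₁ k f) = Sh D hb₂ k (Tmap D (hb₁ / hb₂) f) := by
  funext u
  simp only [Tmap, Sh]
  congr 1; funext i
  field_simp

end Aux

/-- If the function algebra `F` is invariant under all scalings `T_λ`, then
`φ : Σ f_k U^k ↦ Σ (T_{ħ₁/ħ₂} f_k) U^k` is a *-algebra isomorphism
`A^D_{ħ₁,q}(F) ≃ A^D_{ħ₂,q}(F)`: it is a bijection preserving coefficients in `F`,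
addition, multiplication and involution. -/
theorem stmt3 (D : ℕ) (hb₁ hb₂ : ℝ) (h1 : 0 < hb₁) (h2 : 0 < hb₂)
    (q : ℂ) (hq : ‖q‖ = 1) (F : Set (V D → ℂ))
    (hF1 : GoodF D hb₁ F) (hF2 : GoodF D hb₂ F)
    (hT : ∀ (lam : ℝ), ∀ f ∈ F, Tmap D lam f ∈ F) :
    Function.Bijective (phiT D (hb₁ / hb₂)) ∧
    (∀ a : Alg D, (∀ k, a k ∈ F) → ∀ k, (phiT D (hb₁ / hb₂) a) k ∈ F) ∧
    (∀ a b : Alg D, phiT D (hb₁ / hb₂) (a + b) = phiT D (hb₁ / hb₂) a + phiT D (hb₁ / hb₂) b) ∧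
    (∀ (c : ℂ) (a : Alg D), phiT D (hb₁ / hb₂) (c • a) = c • phiT D (hb₁ / hb₂) a) ∧
    (∀ a b : Alg D,
      phiT D (hb₁ / hb₂) (amul D hb₁ q a b) =
        amul D hb₂ q (phiT D (hb₁ / hb₂) a) (phiT D (hb₁ / hb₂) b)) ∧
    (∀ a : Alg D,
      phiT D (hb₁ / hb₂) (astar D hb₁ q a) = astar D hb₂ q (phiT D (hb₁ / hb₂) a)) := by
  classical
  have hb1 : hb₁ ≠ 0 := ne_of_gt h1
  have hb2 : hb₂ ≠ 0 := ne_of_gt h2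
  have hinv : (hb₂ / hb₁) * (hb₁ / hb₂) = 1 := by field_simp
  have hinv' : (hb₁ / hb₂) * (hb₂ / hb₁) = 1 := by field_simp
  have hli : Function.LeftInverse (phiT D (hb₂ / hb₁)) (phiT D (hb₁ / hb₂)) := by
    intro a; ext k
    rw [phiT_apply, phiT_apply, Tmap_comp D _ _ hinv']
  have hri : Function.RightInverse (phiT D (hb₂ / hb₁)) (phiT D (hb₁ / hb₂)) := by
    intro a; ext k
    rw [phiT_apply, phiT_apply, Tmap_comp D _ _ hinv]
  refine ⟨⟨hli.injective, hri.surjective⟩, ?_, ?_, ?_, ?_, ?_⟩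
  · intro a ha k
    rw [phiT_apply]
    exact hT _ _ (ha k)
  · intro a b; ext k
    simp only [phiT_apply, Finsupp.add_apply]
    rfl
  · intro c a; ext k
    simp only [phiT_apply, Finsupp.smul_apply, Tmap_smul]
  · intro a b
    rw [amul, amul, phiT_sum, phiT_eq D _ a, phiT_eq D _ b,
      Finsupp.sum_mapRange_index (fun k => by simp [Finsupp.sum])]
    refine Finsupp.sum_congr fun k _ => ?_
    rw [phiT_sum,
      Finsupp.sum_mapRange_index
        (fun l => by rw [Sh_zero, mul_zero, smul_zero, Finsupp.single_zero])]
    refine Finsupp.sum_congr fun l _ => ?_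
    rw [phiT_single]
    congr 1
    rw [Tmap_smul, Tmap_mul, Tmap_Sh D hb₁ hb₂ hb2]
  · intro a
    rw [astar, astar, phiT_sum, phiT_eq D _ a,
      Finsupp.sum_mapRange_index
        (fun k => by rw [star_zero, Sh_zero, smul_zero, Finsupp.single_zero])]
    refine Finsupp.sum_congr fun k _ => ?_
    rw [phiT_single]
    congr 1
    rw [Tmap_smul, Tmap_Sh D hb₁ hb₂ hb2, Tmap_star]
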